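/- The unique minimizer x* of Γ over (ℓ, u) lies in the middle-third interval I := [ℓ + (u-ℓ)/3, u - (u-ℓ)/3]. -/
import Mathlib


/-- The unique minimizer `x*` of `Γ` over `(ℓ, u)` lies in the middle-third
interval `I = [ℓ+(u-ℓ)/3, u-(u-ℓ)/3]`. -/
theorem stmt_8 (xL xR Δ : ℝ) (hΔ : 0 < Δ) (ℓ u : ℝ)
    (hℓ : ℓ = max (-Δ) xL) (hu : u = min Δ xR) (hℓu : ℓ < u)
    (Γ : ℝ → ℝ)
    (hΓ : ∀ x, Γ x = -Real.log (x - xL) - Real.log (xR - x)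
      - Real.log (Δ + x) - Real.log (Δ - x))
    (xstar : ℝ) (hmem : xstar ∈ Set.Ioo ℓ u) (hmin : IsMinOn Γ (Set.Ioo ℓ u) xstar) :
    xstar ∈ Set.Icc (ℓ + (u - ℓ) / 3) (u - (u - ℓ) / 3) := by
  obtain ⟨hl, hr⟩ := hmem
  have hxL : xL ≤ ℓ := hℓ ▸ le_max_right _ _
  have hmΔ : -Δ ≤ ℓ := hℓ ▸ le_max_left _ _
  have huΔ : u ≤ Δ := hu ▸ min_le_left _ _
  have huR : u ≤ xR := hu ▸ min_le_right _ _
  have p1 : 0 < xstar - xL := by linarith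
  have p2 : 0 < Δ + xstar := by linarith
  have p3 : 0 < xR - xstar := by linarith
  have p4 : 0 < Δ - xstar := by linarith
  -- derivative of Γ at xstar
  have hfe : Γ = fun x => -Real.log (x - xL) - Real.log (xR - x)
      - Real.log (Δ + x) - Real.log (Δ - x) := funext hΓ
  have h1 : HasDerivAt (fun x : ℝ => Real.log (x - xL)) (1 / (xstar - xL)) xstar :=
    (((hasDerivAt_id xstar).sub_const xL).log (ne_of_gt p1)).congr_deriv (by simp)
  have h2 : HasDerivAt (fun x : ℝ => Real.log (xR - x)) ((-1) / (xR - xstar)) xstar :=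
    ((hasDerivAt_id xstar).const_sub xR).log (ne_of_gt p3)
  have h3 : HasDerivAt (fun x : ℝ => Real.log (Δ + x)) (1 / (Δ + xstar)) xstar :=
    (((hasDerivAt_id xstar).const_add Δ).log (ne_of_gt p2)).congr_deriv (by simp)
  have h4 : HasDerivAt (fun x : ℝ => Real.log (Δ - x)) ((-1) / (Δ - xstar)) xstar :=
    ((hasDerivAt_id xstar).const_sub Δ).log (ne_of_gt p4)
  have hD : HasDerivAt Γ
      (-(1 / (xstar - xL)) - (-1) / (xR - xstar) - 1 / (Δ + xstar) - (-1) / (Δ - xstar))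
      xstar := by
    rw [hfe]
    exact ((h1.neg.sub h2).sub h3).sub h4
  have hloc : IsLocalMin Γ xstar := hmin.isLocalMin (Ioo_mem_nhds hl hr)
  have hzero := hloc.hasDerivAt_eq_zero hD
  have heq : 1 / (xstar - xL) + 1 / (Δ + xstar)
      = 1 / (xR - xstar) + 1 / (Δ - xstar) := by
    have e1 : (-1 : ℝ) / (xR - xstar) = -(1 / (xR - xstar)) := by ring
    have e2 : (-1 : ℝ) / (Δ - xstar) = -(1 / (Δ - xstar)) := by ring
    rw [e1, e2] at hzero
    linarith
  -- LHS ≥ 1/(xstar - ℓ)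
  have hL : 1 / (xstar - ℓ) ≤ 1 / (xstar - xL) + 1 / (Δ + xstar) := by
    rcases max_cases (-Δ) xL with ⟨h, _⟩ | ⟨h, _⟩
    · have : Δ + xstar = xstar - ℓ := by rw [hℓ, h]; ring
      rw [this] at *
      have := one_div_pos.mpr p1
      linarith
    · have : xstar - xL = xstar - ℓ := by rw [hℓ, h]
      rw [this] at *
      have := one_div_pos.mpr p2
      linarith
  -- RHS ≥ 1/(u - xstar)
  have hR : 1 / (u - xstar) ≤ 1 / (xR - xstar) + 1 / (Δ - xstar) := by
    rcases min_cases Δ xR with ⟨h, _⟩ | ⟨h, _⟩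
    · have : Δ - xstar = u - xstar := by rw [hu, h]
      rw [this] at *
      have := one_div_pos.mpr p3
      linarith
    · have : xR - xstar = u - xstar := by rw [hu, h]
      rw [this] at *
      have := one_div_pos.mpr p4
      linarith
  -- LHS ≤ 2/(xstar - ℓ), RHS ≤ 2/(u - xstar)
  have ha : (0:ℝ) < xstar - ℓ := by linarith
  have hb : (0:ℝ) < u - xstar := by linarith
  have hL2 : 1 / (xstar - xL) + 1 / (Δ + xstar) ≤ 2 / (xstar - ℓ) := by
    have e1 : 1 / (xstar - xL) ≤ 1 / (xstar - ℓ) :=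
      one_div_le_one_div_of_le ha (by linarith)
    have e2 : 1 / (Δ + xstar) ≤ 1 / (xstar - ℓ) :=
      one_div_le_one_div_of_le ha (by linarith)
    have : (2:ℝ) / (xstar - ℓ) = 1 / (xstar - ℓ) + 1 / (xstar - ℓ) := by ring
    linarith
  have hR2 : 1 / (xR - xstar) + 1 / (Δ - xstar) ≤ 2 / (u - xstar) := by
    have e1 : 1 / (xR - xstar) ≤ 1 / (u - xstar) :=
      one_div_le_one_div_of_le hb (by linarith)
    have e2 : 1 / (Δ - xstar) ≤ 1 / (u - xstar) :=
      one_div_le_one_div_of_le hb (by linarith)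
    have : (2:ℝ) / (u - xstar) = 1 / (u - xstar) + 1 / (u - xstar) := by ring
    linarith
  constructor
  · by_contra hcon
    push_neg at hcon
    -- xstar - ℓ < (u-ℓ)/3, so u - xstar > 2(xstar - ℓ)
    have hba : 2 * (xstar - ℓ) < u - xstar := by linarith
    have : 2 / (u - xstar) < 1 / (xstar - ℓ) :=
      (div_lt_div_iff₀ hb ha).mpr (by linarith)
    linarith
  · by_contra hcon
    push_neg at hcon
    have hab : 2 * (u - xstar) < xstar - ℓ := by linarith
    have : 2 / (xstar - ℓ) < 1 / (u - xstar) :=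
      (div_lt_div_iff₀ ha hb).mpr (by linarith)
    linarith
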